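/- Let ψ₀(t) = 8t(t²−1)/(t²+1)³, η₀(t) = log(1+t²), ζ₀(t) = 1/(t²+1), θ₀(t) = ∫_{t²}^∞ log(s+1)/(s(s+1)) ds. Then ∫₀^∞ ψ₀ζ₀θ₀ dt = −61/54, ∫₀^∞ ψ₀ζ₀²θ₀ dt = −223/216, ∫₀^∞ ψ₀η₀²θ₀ dt = 11 − 8ζ(3), and ∫₀^∞ ψ₀η₀ζ₀θ₀ dt = (4/3)ζ(3) − 179/108, where ζ denotes the Riemann zeta function. -/

import Mathlib

open MeasureTheory Real

noncomputable def psi0 (t : ℝ) : ℝ := 8 * t * (t ^ 2 - 1) / (t ^ 2 + 1) ^ 3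
noncomputable def eta0 (t : ℝ) : ℝ := Real.log (1 + t ^ 2)
noncomputable def zeta0 (t : ℝ) : ℝ := 1 / (t ^ 2 + 1)
noncomputable def theta0 (t : ℝ) : ℝ :=
  ∫ s in Set.Ioi (t ^ 2), Real.log (s + 1) / (s * (s + 1))

/-- `ζ(3) = ∑_{n ≥ 1} 1/n³`. -/
noncomputable def zeta3 : ℝ := ∑' n : ℕ, 1 / ((n : ℝ) + 1) ^ 3

open Set Filter Topology ENNReal NNReal

lemma hasDerivAt_add_one (s : ℝ) : HasDerivAt (fun s : ℝ => s + 1) 1 s := by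
  simpa using (hasDerivAt_id s).add_const 1
lemma hasDerivAt_log_add_one {s : ℝ} (hs : (0:ℝ) ≤ s) :
    HasDerivAt (fun s : ℝ => Real.log (s+1)) (1/(s+1)) s := by
  have h := (hasDerivAt_add_one s).log (by linarith)
  simpa using h
lemma hasDerivAt_pow_inv {s : ℝ} (m : ℕ) (hs : (0:ℝ) ≤ s) :
    HasDerivAt (fun s : ℝ => (((s:ℝ)+1) ^ (m+1))⁻¹)
      (-((m+1) * (s+1)^m) / ((s+1)^(m+1))^2) s := by
  have hne : ((s:ℝ)+1) ^ (m+1) ≠ 0 := by positivity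
  have h := ((hasDerivAt_add_one s).pow (m+1)).inv hne
  refine h.congr_deriv ?_
  simp only [Pi.pow_apply, Nat.add_sub_cancel]
  push_cast
  ring
lemma tendsto_logpow (k m : ℕ) :
    Tendsto (fun s : ℝ => Real.log (s+1) ^ k / (s+1) ^ (m+1)) atTop (𝓝 0) := by
  have h1 : Tendsto (fun v : ℝ => Real.log v ^ k / v ^ (m+1)) atTop (𝓝 0) := by
    have hb : Tendsto (fun v : ℝ => Real.log v ^ k / (1 * v + 0)) atTop (𝓝 0) :=
      Real.tendsto_pow_log_div_mul_add_atTop 1 0 k one_ne_zero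
    simp only [one_mul, add_zero] at hb
    apply squeeze_zero' ?_ ?_ hb
    · filter_upwards [eventually_ge_atTop (1:ℝ)] with v hv
      have : 0 ≤ Real.log v := Real.log_nonneg hv
      positivity
    · filter_upwards [eventually_ge_atTop (1:ℝ)] with v hv
      have : 0 ≤ Real.log v := Real.log_nonneg hv
      apply div_le_div_of_nonneg_left (by positivity) (by positivity)
      exact le_self_pow₀ hv (Nat.succ_ne_zero m)
  have := h1.comp (tendsto_atTop_add_const_right atTop 1 tendsto_id)
  simpa [Function.comp_def] using this
lemma tendsto_logpow_mul (k m : ℕ) :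
    Tendsto (fun s : ℝ => Real.log (s+1) ^ k * (((s:ℝ)+1) ^ (m+1))⁻¹) atTop (𝓝 0) := by
  have := tendsto_logpow k m
  simpa [div_eq_mul_inv] using this

lemma comp2 (m : ℕ) :
    IntegrableOn (fun s : ℝ => Real.log (s+1) ^ 2 / (s+1) ^ (m+2)) (Ioi 0) ∧
    (∫ s in Ioi (0:ℝ), Real.log (s+1) ^ 2 / (s+1) ^ (m+2)) = 2 / ((m:ℝ)+1) ^ 3 := by
  set c : ℝ := (m:ℝ) + 1 with hcdef
  have hc : 0 < c := by positivity
  set G : ℝ → ℝ := fun s =>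
    -((1/c) * (Real.log (s+1) ^ 2 * (((s:ℝ)+1) ^ (m+1))⁻¹))
      - (2/c^2) * (Real.log (s+1) * (((s:ℝ)+1) ^ (m+1))⁻¹)
      - (2/c^3) * (((s:ℝ)+1) ^ (m+1))⁻¹ with hGdef
  have hderiv : ∀ x ∈ Ici (0:ℝ), HasDerivAt G (Real.log (x+1) ^ 2 / (x+1) ^ (m+2)) x := by
    intro x hx
    have hx0 : (0:ℝ) ≤ x := hx
    have hL := hasDerivAt_log_add_one hx0
    have hP := hasDerivAt_pow_inv m hx0
    have h := (((((hL.pow 2).mul hP).const_mul (1/c)).neg).sub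
      ((hL.mul hP).const_mul (2/c^2))).sub (hP.const_mul (2/c^3))
    refine h.congr_deriv ?_
    have h1 : (x:ℝ) + 1 ≠ 0 := by linarith
    have h2 : ((x:ℝ)+1) ^ (m+1) ≠ 0 := by positivity
    simp only [Pi.pow_apply, Pi.mul_apply]
    field_simp
    ring
  have hpos : ∀ x ∈ Ioi (0:ℝ), 0 ≤ Real.log (x+1) ^ 2 / (x+1) ^ (m+2) := by
    intro x hx
    have hx0 : (0:ℝ) < x := hx
    positivity
  have htend : Tendsto G atTop (𝓝 0) := by
    have h2 := (tendsto_logpow_mul 2 m).const_mul (1/c)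
    have h1 := (tendsto_logpow_mul 1 m).const_mul (2/c^2)
    have h0 := (tendsto_logpow_mul 0 m).const_mul (2/c^3)
    simp only [pow_one, pow_zero, one_mul] at h1 h0
    have := ((h2.neg).sub h1).sub h0
    simpa [hGdef, one_div] using this
  have hcont : ContinuousWithinAt G (Ici 0) 0 :=
    (hderiv 0 self_mem_Ici).continuousAt.continuousWithinAt
  have hG0 : G 0 = -(2/c^3) := by simp [hGdef]
  constructor
  · exact integrableOn_Ioi_deriv_of_nonneg hcont (fun x hx => hderiv x (Ioi_subset_Ici_self hx)) hpos htend
  · rw [integral_Ioi_of_hasDerivAt_of_nonneg hcont (fun x hx => hderiv x (Ioi_subset_Ici_self hx)) hpos htend,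
      hG0]
    rw [zero_sub, neg_neg, hcdef]

lemma comp3 (m : ℕ) :
    IntegrableOn (fun s : ℝ => Real.log (s+1) ^ 3 / (s+1) ^ (m+2)) (Ioi 0) ∧
    (∫ s in Ioi (0:ℝ), Real.log (s+1) ^ 3 / (s+1) ^ (m+2)) = 6 / ((m:ℝ)+1) ^ 4 := by
  set c : ℝ := (m:ℝ) + 1 with hcdef
  have hc : 0 < c := by positivity
  set G : ℝ → ℝ := fun s =>
    -((1/c) * (Real.log (s+1) ^ 3 * (((s:ℝ)+1) ^ (m+1))⁻¹))
      - (3/c^2) * (Real.log (s+1) ^ 2 * (((s:ℝ)+1) ^ (m+1))⁻¹)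
      - (6/c^3) * (Real.log (s+1) * (((s:ℝ)+1) ^ (m+1))⁻¹)
      - (6/c^4) * (((s:ℝ)+1) ^ (m+1))⁻¹ with hGdef
  have hderiv : ∀ x ∈ Ici (0:ℝ), HasDerivAt G (Real.log (x+1) ^ 3 / (x+1) ^ (m+2)) x := by
    intro x hx
    have hx0 : (0:ℝ) ≤ x := hx
    have hL := hasDerivAt_log_add_one hx0
    have hP := hasDerivAt_pow_inv m hx0
    have h := ((((((hL.pow 3).mul hP).const_mul (1/c)).neg).sub
      (((hL.pow 2).mul hP).const_mul (3/c^2))).sub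
      ((hL.mul hP).const_mul (6/c^3))).sub (hP.const_mul (6/c^4))
    refine h.congr_deriv ?_
    have h1 : (x:ℝ) + 1 ≠ 0 := by linarith
    have h2 : ((x:ℝ)+1) ^ (m+1) ≠ 0 := by positivity
    simp only [Pi.pow_apply, Pi.mul_apply]
    field_simp
    ring
  have hpos : ∀ x ∈ Ioi (0:ℝ), 0 ≤ Real.log (x+1) ^ 3 / (x+1) ^ (m+2) := by
    intro x hx
    have hx0 : (0:ℝ) < x := hx
    have : 0 ≤ Real.log (x+1) := Real.log_nonneg (by linarith)
    positivity
  have htend : Tendsto G atTop (𝓝 0) := by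
    have h3 := (tendsto_logpow_mul 3 m).const_mul (1/c)
    have h2 := (tendsto_logpow_mul 2 m).const_mul (3/c^2)
    have h1 := (tendsto_logpow_mul 1 m).const_mul (6/c^3)
    have h0 := (tendsto_logpow_mul 0 m).const_mul (6/c^4)
    simp only [pow_one, pow_zero, one_mul] at h1 h0
    have := (((h3.neg).sub h2).sub h1).sub h0
    simpa [hGdef, one_div] using this
  have hcont : ContinuousWithinAt G (Ici 0) 0 :=
    (hderiv 0 self_mem_Ici).continuousAt.continuousWithinAt
  have hG0 : G 0 = -(6/c^4) := by simp [hGdef]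
  constructor
  · exact integrableOn_Ioi_deriv_of_nonneg hcont (fun x hx => hderiv x (Ioi_subset_Ici_self hx)) hpos htend
  · rw [integral_Ioi_of_hasDerivAt_of_nonneg hcont (fun x hx => hderiv x (Ioi_subset_Ici_self hx)) hpos htend,
      hG0]
    rw [zero_sub, neg_neg, hcdef]

lemma comp1 (m : ℕ) :
    IntegrableOn (fun s : ℝ => Real.log (s+1) / (s+1) ^ (m+2)) (Ioi 0) ∧
    (∫ s in Ioi (0:ℝ), Real.log (s+1) / (s+1) ^ (m+2)) = 1 / ((m:ℝ)+1) ^ 2 := by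
  set c : ℝ := (m:ℝ) + 1 with hcdef
  have hc : 0 < c := by positivity
  set G : ℝ → ℝ := fun s =>
    -((1/c) * (Real.log (s+1) * (((s:ℝ)+1) ^ (m+1))⁻¹)) - (1/c^2) * (((s:ℝ)+1) ^ (m+1))⁻¹
    with hGdef
  have hderiv : ∀ x ∈ Ici (0:ℝ), HasDerivAt G (Real.log (x+1) / (x+1) ^ (m+2)) x := by
    intro x hx
    have hx0 : (0:ℝ) ≤ x := hx
    have hL := hasDerivAt_log_add_one hx0
    have hP := hasDerivAt_pow_inv m hx0
    have h := (((hL.mul hP).const_mul (1/c)).neg).sub (hP.const_mul (1/c^2))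
    refine h.congr_deriv ?_
    have h1 : (x:ℝ) + 1 ≠ 0 := by linarith
    have h2 : ((x:ℝ)+1) ^ (m+1) ≠ 0 := by positivity
    field_simp
    ring
  have hpos : ∀ x ∈ Ioi (0:ℝ), 0 ≤ Real.log (x+1) / (x+1) ^ (m+2) := by
    intro x hx
    have hx0 : (0:ℝ) < x := hx
    have : 0 ≤ Real.log (x+1) := Real.log_nonneg (by linarith)
    positivity
  have htend : Tendsto G atTop (𝓝 0) := by
    have h1 := (tendsto_logpow_mul 1 m).const_mul (1/c)
    have h0 := (tendsto_logpow_mul 0 m).const_mul (1/c^2)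
    simp only [pow_one, pow_zero, one_mul] at h1 h0
    have := (h1.neg).sub h0
    simpa [hGdef, one_div] using this
  have hcont : ContinuousWithinAt G (Ici 0) 0 :=
    (hderiv 0 self_mem_Ici).continuousAt.continuousWithinAt
  have hG0 : G 0 = -(1/c^2) := by simp [hGdef]
  constructor
  · exact integrableOn_Ioi_deriv_of_nonneg hcont (fun x hx => hderiv x (Ioi_subset_Ici_self hx)) hpos htend
  · rw [integral_Ioi_of_hasDerivAt_of_nonneg hcont (fun x hx => hderiv x (Ioi_subset_Ici_self hx)) hpos htend,
      hG0]
    rw [zero_sub, neg_neg, hcdef]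

noncomputable def gg (s : ℝ) : ℝ := Real.log (s + 1) / (s * (s + 1))

lemma gg_meas : Measurable gg := by
  unfold gg
  exact (Real.measurable_log.comp (measurable_id.add_const 1)).div ((measurable_id.mul (measurable_id.add_const 1)))

lemma meas_b (k m : ℕ) : Measurable (fun s : ℝ => Real.log (s+1) ^ k / (s+1) ^ (m+2)) :=
  ((Real.measurable_log.comp (measurable_id.add_const 1)).pow_const k).div ((measurable_id.add_const 1).pow_const (m+2))

-- bounded on Ioc 0 1
lemma log_add_one_le {s : ℝ} (hs : 0 ≤ s) : Real.log (s+1) ≤ s := by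
  have := Real.log_le_sub_one_of_pos (x := s+1) (by linarith)
  linarith

lemma gg_int_Ioc : IntegrableOn gg (Ioc (0:ℝ) 1) := by
  apply Integrable.mono' (g := fun _ : ℝ => (1:ℝ))
  · exact integrableOn_const (by simp)
  · exact (gg_meas.aestronglyMeasurable).restrict
  · refine (ae_restrict_iff' measurableSet_Ioc).mpr (ae_of_all _ ?_)
    intro s hs
    obtain ⟨h0, h1⟩ := hs
    have hlog : 0 ≤ Real.log (s+1) := Real.log_nonneg (by linarith)
    have hle : Real.log (s+1) ≤ s := log_add_one_le h0.le
    rw [Real.norm_eq_abs, abs_of_nonneg (by unfold gg; positivity)]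
    unfold gg
    rw [div_le_one (by positivity)]
    nlinarith

lemma gg_int_Ioi1 : IntegrableOn gg (Ioi (1:ℝ)) := by
  apply Integrable.mono' (g := fun s : ℝ => 2 * (Real.log (s+1) / (s+1) ^ (0+2)))
  · exact ((comp1 0).1.mono_set (by intro x hx; exact lt_trans one_pos (mem_Ioi.mp hx))).const_mul 2
  · exact (gg_meas.aestronglyMeasurable).restrict
  · refine (ae_restrict_iff' measurableSet_Ioi).mpr (ae_of_all _ ?_)
    intro s hs
    have hs1 : (1:ℝ) < s := hs
    have hlog : 0 ≤ Real.log (s+1) := Real.log_nonneg (by linarith)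
    rw [Real.norm_eq_abs, abs_of_nonneg (by unfold gg; positivity)]
    unfold gg
    rw [mul_div_assoc', div_le_div_iff₀ (by nlinarith) (by positivity)]
    have key : (s+1)^2 ≤ 2*(s*(s+1)) := by nlinarith
    calc Real.log (s+1) * (s+1)^(0+2) = Real.log (s+1) * (s+1)^2 := by norm_num
    _ ≤ Real.log (s+1) * (2*(s*(s+1))) := mul_le_mul_of_nonneg_left key hlog
    _ = 2 * Real.log (s+1) * (s*(s+1)) := by ring

lemma gg_int : IntegrableOn gg (Ioi (0:ℝ)) := by
  have : Ioi (0:ℝ) = Ioc 0 1 ∪ Ioi 1 := by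
    rw [Ioc_union_Ioi_eq_Ioi]; norm_num
  rw [this]
  exact gg_int_Ioc.union gg_int_Ioi1

lemma gg_nonneg {s : ℝ} (hs : 0 < s) : 0 ≤ gg s := by
  unfold gg
  have : 0 ≤ Real.log (s+1) := Real.log_nonneg (by linarith)
  positivity

noncomputable def gg2 (s : ℝ) : ℝ := Real.log (s + 1) ^ 2 / (s * (s + 1))

lemma gg2_meas : Measurable gg2 := by
  unfold gg2
  exact ((Real.measurable_log.comp (measurable_id.add_const 1)).pow_const 2).div
    ((measurable_id.mul (measurable_id.add_const 1)))

lemma summable_cube : Summable (fun n : ℕ => 1/((n:ℝ)+1)^3) := by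
  have h := (_root_.summable_nat_add_iff (f := fun n : ℕ => 1/(n:ℝ)^3) 1).mpr
    (summable_one_div_nat_pow.mpr (by norm_num))
  refine h.congr fun n => ?_
  push_cast
  ring

lemma summable_cube2 : Summable (fun n : ℕ => 2/((n:ℝ)+1)^3) := by
  have := summable_cube.mul_left 2
  refine this.congr fun n => ?_
  ring

lemma gg2_tsum {s : ℝ} (hs : 0 < s) :
    ∑' n : ℕ, Real.log (s+1) ^ 2 / (s+1) ^ (n+2) = gg2 s := by
  have hs1 : (0:ℝ) < s + 1 := by linarith
  have hr0 : (0:ℝ) ≤ (s+1)⁻¹ := by positivity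
  have hr1 : (s+1)⁻¹ < 1 := by
    rw [inv_lt_one_iff₀]; right; linarith
  have hgeom := tsum_geometric_of_lt_one hr0 hr1
  have key : ∀ n : ℕ, Real.log (s+1) ^ 2 / (s+1) ^ (n+2) =
      (Real.log (s+1) ^ 2 * ((s+1)⁻¹)^2) * ((s+1)⁻¹) ^ n := by
    intro n
    rw [div_eq_mul_inv, ← inv_pow, pow_add]
    ring
  rw [tsum_congr key, _root_.tsum_mul_left, hgeom]
  unfold gg2
  have h1 : 1 - (s+1)⁻¹ = s/(s+1) := by field_simp; ring
  rw [h1]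
  field_simp

lemma gg2_lintegral_n (n : ℕ) :
    (∫⁻ s in Ioi (0:ℝ), ENNReal.ofReal (Real.log (s+1) ^ 2 / (s+1) ^ (n+2))) =
      ENNReal.ofReal (2/((n:ℝ)+1)^3) := by
  rw [← MeasureTheory.ofReal_integral_eq_lintegral_ofReal (comp2 n).1]
  · rw [(comp2 n).2]
  · refine (ae_restrict_iff' measurableSet_Ioi).mpr (ae_of_all _ ?_)
    intro s hs
    have hs0 : (0:ℝ) < s := hs
    have : 0 ≤ Real.log (s+1) := Real.log_nonneg (by linarith)
    positivity

lemma gg2_nnnorm_ae (n : ℕ) :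
    (∫⁻ s in Ioi (0:ℝ), (‖Real.log (s+1) ^ 2 / (s+1) ^ (n+2)‖₊ : ℝ≥0∞)) =
      ENNReal.ofReal (2/((n:ℝ)+1)^3) := by
  rw [← gg2_lintegral_n n]
  apply lintegral_congr_ae
  refine (ae_restrict_iff' measurableSet_Ioi).mpr (ae_of_all _ ?_)
  intro s hs
  have hs0 : (0:ℝ) < s := hs
  have : 0 ≤ Real.log (s+1) := Real.log_nonneg (by linarith)
  exact Real.enorm_eq_ofReal (by positivity)

lemma gg2_tsum_lintegral_ne_top :
    (∑' n : ℕ, ∫⁻ s in Ioi (0:ℝ), (‖Real.log (s+1) ^ 2 / (s+1) ^ (n+2)‖₊ : ℝ≥0∞)) ≠ ⊤ := by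
  have : ∀ n : ℕ, (∫⁻ s in Ioi (0:ℝ), (‖Real.log (s+1) ^ 2 / (s+1) ^ (n+2)‖₊ : ℝ≥0∞)) =
      ENNReal.ofReal (2/((n:ℝ)+1)^3) := gg2_nnnorm_ae
  rw [tsum_congr this, ← ENNReal.ofReal_tsum_of_nonneg (fun n => by positivity) summable_cube2]
  exact ENNReal.ofReal_ne_top

lemma gg2_integral : (∫ s in Ioi (0:ℝ), gg2 s) = 2 * ∑' n : ℕ, 1/((n:ℝ)+1)^3 := by
  have hcong : (∫ s in Ioi (0:ℝ), gg2 s) =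
      ∫ s in Ioi (0:ℝ), ∑' n : ℕ, Real.log (s+1) ^ 2 / (s+1) ^ (n+2) := by
    refine setIntegral_congr_fun measurableSet_Ioi fun s hs => ?_
    exact (gg2_tsum hs).symm
  rw [hcong, MeasureTheory.integral_tsum
    (fun n => (meas_b 2 n).aestronglyMeasurable.restrict) gg2_tsum_lintegral_ne_top]
  have : ∀ n : ℕ, (∫ s in Ioi (0:ℝ), Real.log (s+1) ^ 2 / (s+1) ^ (n+2)) = 2/((n:ℝ)+1)^3 :=
    fun n => (comp2 n).2
  rw [tsum_congr this, ← _root_.tsum_mul_left]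
  exact tsum_congr fun n => by ring

lemma gg2_int_Ioc : IntegrableOn gg2 (Ioc (0:ℝ) 1) := by
  apply Integrable.mono' (g := fun _ : ℝ => (1:ℝ))
  · exact integrableOn_const (by simp)
  · exact (gg2_meas.aestronglyMeasurable).restrict
  · refine (ae_restrict_iff' measurableSet_Ioc).mpr (ae_of_all _ ?_)
    intro s hs
    obtain ⟨h0, h1⟩ := hs
    have hlog : 0 ≤ Real.log (s+1) := Real.log_nonneg (by linarith)
    have hle : Real.log (s+1) ≤ s := log_add_one_le h0.le
    rw [Real.norm_eq_abs, abs_of_nonneg (by unfold gg2; positivity)]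
    unfold gg2
    rw [div_le_one (by positivity)]
    nlinarith

lemma gg2_int_Ioi1 : IntegrableOn gg2 (Ioi (1:ℝ)) := by
  apply Integrable.mono' (g := fun s : ℝ => 2 * (Real.log (s+1) ^ 2 / (s+1) ^ (0+2)))
  · exact ((comp2 0).1.mono_set (by intro x hx; exact lt_trans one_pos (mem_Ioi.mp hx))).const_mul 2
  · exact (gg2_meas.aestronglyMeasurable).restrict
  · refine (ae_restrict_iff' measurableSet_Ioi).mpr (ae_of_all _ ?_)
    intro s hs
    have hs1 : (1:ℝ) < s := hs
    have hlog : 0 ≤ Real.log (s+1) := Real.log_nonneg (by linarith)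
    rw [Real.norm_eq_abs, abs_of_nonneg (by unfold gg2; positivity)]
    unfold gg2
    rw [mul_div_assoc', div_le_div_iff₀ (by nlinarith) (by positivity)]
    have key : (s+1)^2 ≤ 2*(s*(s+1)) := by nlinarith
    calc Real.log (s+1)^2 * (s+1)^(0+2) = Real.log (s+1)^2 * (s+1)^2 := by norm_num
    _ ≤ Real.log (s+1)^2 * (2*(s*(s+1))) := mul_le_mul_of_nonneg_left key (by positivity)
    _ = 2 * Real.log (s+1)^2 * (s*(s+1)) := by ring

lemma gg2_int : IntegrableOn gg2 (Ioi (0:ℝ)) := by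
  have : Ioi (0:ℝ) = Ioc 0 1 ∪ Ioi 1 := by
    rw [Ioc_union_Ioi_eq_Ioi]; norm_num
  rw [this]
  exact gg2_int_Ioc.union gg2_int_Ioi1

lemma master (F Φ : ℝ → ℝ) (hF : Continuous F)
    (hΦ : ∀ t, HasDerivAt Φ (F t) t) (hΦ0 : Φ 0 = 0)
    (hFi : IntegrableOn F (Ioi 0)) :
    (∫ t in Ioi (0:ℝ), F t * theta0 t) = ∫ s in Ioi (0:ℝ), gg s * Φ (Real.sqrt s) := by
  have hstep1 : (∫ t in Ioi (0:ℝ), F t * theta0 t) =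
      ∫ t in Ioi (0:ℝ), ∫ s in Ioi (0:ℝ), F t * (Ioi (t^2)).indicator gg s := by
    refine setIntegral_congr_fun measurableSet_Ioi fun t ht => ?_
    have ht0 : (0:ℝ) < t := ht
    have h1 : theta0 t = ∫ s in Ioi (0:ℝ), (Ioi (t^2)).indicator gg s := by
      rw [setIntegral_indicator measurableSet_Ioi]
      have : Ioi (0:ℝ) ∩ Ioi (t^2) = Ioi (t^2) :=
        inter_eq_self_of_subset_right (Ioi_subset_Ioi (by positivity))
      rw [this]
      rfl
    rw [h1, ← integral_const_mul]
  rw [hstep1]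
  have hprod : Integrable (Function.uncurry fun t s : ℝ => F t * (Ioi (t^2)).indicator gg s)
      ((volume.restrict (Ioi (0:ℝ))).prod (volume.restrict (Ioi (0:ℝ)))) := by
    have heq : (Function.uncurry fun t s : ℝ => F t * (Ioi (t^2)).indicator gg s)
        = {p : ℝ × ℝ | p.1^2 < p.2}.indicator (fun p => F p.1 * gg p.2) := by
      funext p
      by_cases h : p.1^2 < p.2
      · simp only [Function.uncurry, Set.indicator_of_mem, h, Set.mem_setOf_eq,
          Set.indicator_of_mem (Set.mem_Ioi.mpr h)]
      · simp only [Function.uncurry, Set.mem_setOf_eq, h, not_false_iff,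
          Set.indicator_of_notMem, Set.indicator_of_notMem (fun hh => h (Set.mem_Ioi.mp hh)),
          mul_zero]
    rw [heq]
    have hmeas : MeasurableSet {p : ℝ × ℝ | p.1^2 < p.2} :=
      measurableSet_lt (measurable_fst.pow_const 2) measurable_snd
    exact (Integrable.mul_prod hFi gg_int).indicator hmeas
  rw [MeasureTheory.integral_integral_swap hprod]
  refine setIntegral_congr_fun measurableSet_Ioi fun s hs => ?_
  have hs0 : (0:ℝ) < s := hs
  have hsq : 0 < Real.sqrt s := Real.sqrt_pos.mpr hs0
  have hinner : (fun t => F t * (Ioi (t^2)).indicator gg s) =ᵐ[volume.restrict (Ioi (0:ℝ))]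
      (fun t => (Ioo (0:ℝ) (Real.sqrt s)).indicator (fun t => gg s * F t) t) := by
    refine (ae_restrict_iff' measurableSet_Ioi).mpr (ae_of_all _ ?_)
    intro t ht
    have ht0 : (0:ℝ) < t := ht
    dsimp only
    by_cases h : t^2 < s
    · rw [Set.indicator_of_mem (Set.mem_Ioi.mpr h),
        Set.indicator_of_mem (Set.mem_Ioo.mpr ⟨ht0, (Real.lt_sqrt ht0.le).mpr h⟩)]
      ring
    · rw [Set.indicator_of_notMem (fun hh => h (Set.mem_Ioi.mp hh)),
        Set.indicator_of_notMem (fun hh => h ((Real.lt_sqrt ht0.le).mp (Set.mem_Ioo.mp hh).2))]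
      rw [mul_zero]
  rw [integral_congr_ae hinner, setIntegral_indicator measurableSet_Ioo]
  have hset : Ioi (0:ℝ) ∩ Ioo 0 (Real.sqrt s) = Ioo 0 (Real.sqrt s) :=
    inter_eq_self_of_subset_right Ioo_subset_Ioi_self
  rw [hset, integral_const_mul]
  congr 1
  rw [← integral_Ioc_eq_integral_Ioo, ← intervalIntegral.integral_of_le (Real.sqrt_nonneg s)]
  rw [intervalIntegral.integral_eq_sub_of_hasDerivAt (fun x _ => hΦ x)
    (hF.intervalIntegrable 0 (Real.sqrt s))]
  rw [hΦ0, sub_zero]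

lemma cont_psi0 : Continuous psi0 := by
  unfold psi0
  exact (continuous_const.mul continuous_id |>.mul ((continuous_pow 2).sub continuous_const)).div
    (((continuous_pow 2).add continuous_const).pow 3) (fun t => (by positivity : ((t:ℝ)^2+1)^3 ≠ 0))

lemma cont_zeta0 : Continuous zeta0 := by
  unfold zeta0
  exact continuous_const.div ((continuous_pow 2).add continuous_const) (fun t => (by positivity : (t:ℝ)^2+1 ≠ 0))

lemma cont_eta0 : Continuous eta0 := by
  unfold eta0
  exact (continuous_const.add (continuous_pow 2)).log (fun t => (by positivity : (1:ℝ)+t^2 ≠ 0))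

lemma hasDerivAt_q (t : ℝ) : HasDerivAt (fun t : ℝ => t^2+1) (2*t) t := by
  simpa using (hasDerivAt_pow 2 t).add_const 1

lemma hasDerivAt_u (t : ℝ) : HasDerivAt (fun t : ℝ => (t^2+1)⁻¹) (-(2*t)/(t^2+1)^2) t :=
  (hasDerivAt_q t).inv (by positivity)

lemma hasDerivAt_Leta (t : ℝ) : HasDerivAt (fun t : ℝ => Real.log (1+t^2)) (2*t/(1+t^2)) t := by
  have h := ((hasDerivAt_pow 2 t).const_add 1).log (by positivity)
  simpa using h

noncomputable def Phi1 (t : ℝ) : ℝ := -2*((t^2+1)⁻¹)^2 + (8/3)*((t^2+1)⁻¹)^3 - 2/3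

lemma Phi1_deriv (t : ℝ) : HasDerivAt Phi1 (psi0 t * zeta0 t) t := by
  have h := ((((hasDerivAt_u t).pow 2).const_mul (-2:ℝ)).add
    (((hasDerivAt_u t).pow 3).const_mul (8/3:ℝ))).sub_const (2/3)
  have he : Phi1 = fun t : ℝ => -2*((t^2+1)⁻¹)^2 + (8/3)*((t^2+1)⁻¹)^3 - 2/3 := rfl
  rw [he]
  refine h.congr_deriv ?_
  unfold psi0 zeta0
  have h1 : (t:ℝ)^2+1 ≠ 0 := by positivity
  norm_num [Pi.pow_apply]
  field_simp
  ring

lemma int_bound (F : ℝ → ℝ) (hF : Continuous F)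
    (hb : ∀ t : ℝ, 0 < t → ‖F t‖ ≤ 128 * (1+t^2)⁻¹) : IntegrableOn F (Ioi (0:ℝ)) := by
  apply Integrable.mono' (g := fun t : ℝ => 128 * (1+t^2)⁻¹)
  · exact (integrable_inv_one_add_sq.const_mul 128).restrict
  · exact hF.aestronglyMeasurable.restrict
  · refine (ae_restrict_iff' measurableSet_Ioi).mpr (ae_of_all _ fun t ht => hb t ht)

lemma psi0_abs {t : ℝ} (ht : 0 < t) : |psi0 t| ≤ 8*t/(t^2+1)^2 := by
  unfold psi0
  rw [abs_div, abs_of_pos (show (0:ℝ) < (t^2+1)^3 by positivity), div_le_div_iff₀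
    (by positivity) (by positivity)]
  have h1 : |8*t*(t^2-1)| ≤ 8*t*(t^2+1) := by
    rw [abs_mul, abs_of_pos (by positivity : (0:ℝ) < 8*t)]
    have : |t^2-1| ≤ t^2+1 := abs_le.mpr ⟨by nlinarith, by nlinarith⟩
    nlinarith
  nlinarith [sq_nonneg t, pow_pos (show (0:ℝ) < t^2+1 by positivity) 2]

lemma Fint1 : IntegrableOn (fun t => psi0 t * zeta0 t) (Ioi (0:ℝ)) := by
  apply int_bound (fun t => psi0 t * zeta0 t) (cont_psi0.mul cont_zeta0)
  intro t ht
  rw [Real.norm_eq_abs, abs_mul]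
  have h1 := psi0_abs ht
  have h2 : |zeta0 t| ≤ 1 := by
    unfold zeta0
    rw [abs_of_pos (by positivity), div_le_one (by positivity)]
    nlinarith
  have h3 : |psi0 t| * |zeta0 t| ≤ (8*t/(t^2+1)^2) * 1 :=
    mul_le_mul h1 h2 (abs_nonneg _) (by positivity)
  refine h3.trans ?_
  rw [mul_one, div_le_iff₀ (by positivity)]
  have : (1+t^2)⁻¹ * (1+t^2) = 1 := by field_simp
  nlinarith [sq_nonneg (t-1), sq_nonneg t, inv_pos.mpr (show (0:ℝ) < 1+t^2 by positivity),
    mul_pos (inv_pos.mpr (show (0:ℝ) < 1+t^2 by positivity)) (pow_pos (show (0:ℝ) < t^2+1 by positivity) 2)]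

lemma case1 : (∫ t in Ioi (0:ℝ), psi0 t * zeta0 t * theta0 t) = -61/54 := by
  refine Eq.trans (master (fun t => psi0 t * zeta0 t) Phi1
    (cont_psi0.mul cont_zeta0) Phi1_deriv (by unfold Phi1; norm_num) Fint1) ?_
  have hpt : ∀ s ∈ Ioi (0:ℝ), gg s * Phi1 (Real.sqrt s) =
      -(8/3) * (Real.log (s+1) / (s+1)^(2+2)) + (-(2/3) * (Real.log (s+1) / (s+1)^(1+2))
        + -(2/3) * (Real.log (s+1) / (s+1)^(0+2))) := by
    intro s hs
    have hs0 : (0:ℝ) < s := hs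
    unfold gg Phi1
    rw [Real.sq_sqrt hs0.le]
    have h1 : s ≠ 0 := ne_of_gt hs0
    have h2 : s + 1 ≠ 0 := by positivity
    field_simp
    ring
  rw [setIntegral_congr_fun measurableSet_Ioi hpt]
  have h4 : Integrable (fun s : ℝ => -(8/3) * (Real.log (s+1) / (s+1)^(2+2)))
      (volume.restrict (Ioi 0)) := (comp1 2).1.const_mul _
  have h3 : Integrable (fun s : ℝ => -(2/3) * (Real.log (s+1) / (s+1)^(1+2)))
      (volume.restrict (Ioi 0)) := (comp1 1).1.const_mul _
  have h2 : Integrable (fun s : ℝ => -(2/3) * (Real.log (s+1) / (s+1)^(0+2)))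
      (volume.restrict (Ioi 0)) := (comp1 0).1.const_mul _
  have h32 : Integrable (fun s : ℝ => -(2/3) * (Real.log (s+1) / (s+1)^(1+2))
      + -(2/3) * (Real.log (s+1) / (s+1)^(0+2))) (volume.restrict (Ioi 0)) := h3.add h2
  rw [integral_add h4 h32, integral_add h3 h2,
    integral_const_mul, integral_const_mul, integral_const_mul, (comp1 2).2, (comp1 1).2, (comp1 0).2]
  norm_num

noncomputable def Phi2 (t : ℝ) : ℝ := -(4/3)*((t^2+1)⁻¹)^3 + 2*((t^2+1)⁻¹)^4 - 2/3

lemma Phi2_deriv (t : ℝ) : HasDerivAt Phi2 (psi0 t * zeta0 t ^ 2) t := by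
  have h := ((((hasDerivAt_u t).pow 3).const_mul (-(4/3):ℝ)).add
    (((hasDerivAt_u t).pow 4).const_mul (2:ℝ))).sub_const (2/3)
  have he : Phi2 = fun t : ℝ => -(4/3)*((t^2+1)⁻¹)^3 + 2*((t^2+1)⁻¹)^4 - 2/3 := rfl
  rw [he]
  refine h.congr_deriv ?_
  unfold psi0 zeta0
  have h1 : (t:ℝ)^2+1 ≠ 0 := by positivity
  norm_num [Pi.pow_apply]
  field_simp
  ring

lemma Fint2 : IntegrableOn (fun t => psi0 t * zeta0 t ^ 2) (Ioi (0:ℝ)) := by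
  apply int_bound (fun t => psi0 t * zeta0 t ^ 2) (cont_psi0.mul (cont_zeta0.pow 2))
  intro t ht
  rw [Real.norm_eq_abs, abs_mul]
  have h1 := psi0_abs ht
  have h2 : |zeta0 t ^ 2| ≤ 1 := by
    unfold zeta0
    rw [abs_pow, abs_of_pos (by positivity)]
    have : (1:ℝ)/(t^2+1) ≤ 1 := by rw [div_le_one (by positivity)]; nlinarith
    nlinarith [div_pos one_pos (show (0:ℝ) < t^2+1 by positivity)]
  have h3 : |psi0 t| * |zeta0 t ^ 2| ≤ (8*t/(t^2+1)^2) * 1 :=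
    mul_le_mul h1 h2 (abs_nonneg _) (by positivity)
  refine h3.trans ?_
  rw [mul_one, div_le_iff₀ (by positivity)]
  have : (1+t^2)⁻¹ * (1+t^2) = 1 := by field_simp
  nlinarith [sq_nonneg (t-1), sq_nonneg t, inv_pos.mpr (show (0:ℝ) < 1+t^2 by positivity),
    mul_pos (inv_pos.mpr (show (0:ℝ) < 1+t^2 by positivity)) (pow_pos (show (0:ℝ) < t^2+1 by positivity) 2)]

lemma case2 : (∫ t in Ioi (0:ℝ), psi0 t * zeta0 t ^ 2 * theta0 t) = -223/216 := by
  refine Eq.trans (master (fun t => psi0 t * zeta0 t ^ 2) Phi2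
    (cont_psi0.mul (cont_zeta0.pow 2)) Phi2_deriv (by unfold Phi2; norm_num) Fint2) ?_
  have hpt : ∀ s ∈ Ioi (0:ℝ), gg s * Phi2 (Real.sqrt s) =
      -2 * (Real.log (s+1) / (s+1)^(3+2)) + (-(2/3) * (Real.log (s+1) / (s+1)^(2+2))
        + (-(2/3) * (Real.log (s+1) / (s+1)^(1+2)) + -(2/3) * (Real.log (s+1) / (s+1)^(0+2)))) := by
    intro s hs
    have hs0 : (0:ℝ) < s := hs
    unfold gg Phi2
    rw [Real.sq_sqrt hs0.le]
    have h1 : s ≠ 0 := ne_of_gt hs0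
    have h2 : s + 1 ≠ 0 := by positivity
    field_simp
    ring
  rw [setIntegral_congr_fun measurableSet_Ioi hpt]
  have h5 : Integrable (fun s : ℝ => -2 * (Real.log (s+1) / (s+1)^(3+2)))
      (volume.restrict (Ioi 0)) := (comp1 3).1.const_mul _
  have h4 : Integrable (fun s : ℝ => -(2/3) * (Real.log (s+1) / (s+1)^(2+2)))
      (volume.restrict (Ioi 0)) := (comp1 2).1.const_mul _
  have h3 : Integrable (fun s : ℝ => -(2/3) * (Real.log (s+1) / (s+1)^(1+2)))
      (volume.restrict (Ioi 0)) := (comp1 1).1.const_mul _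
  have h2 : Integrable (fun s : ℝ => -(2/3) * (Real.log (s+1) / (s+1)^(0+2)))
      (volume.restrict (Ioi 0)) := (comp1 0).1.const_mul _
  have h32 : Integrable (fun s : ℝ => -(2/3) * (Real.log (s+1) / (s+1)^(1+2))
      + -(2/3) * (Real.log (s+1) / (s+1)^(0+2))) (volume.restrict (Ioi 0)) := h3.add h2
  have h432 : Integrable (fun s : ℝ => -(2/3) * (Real.log (s+1) / (s+1)^(2+2))
      + (-(2/3) * (Real.log (s+1) / (s+1)^(1+2))
      + -(2/3) * (Real.log (s+1) / (s+1)^(0+2)))) (volume.restrict (Ioi 0)) := h4.add h32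
  rw [integral_add h5 h432, integral_add h4 h32, integral_add h3 h2,
    integral_const_mul, integral_const_mul, integral_const_mul, integral_const_mul,
    (comp1 3).2, (comp1 2).2, (comp1 1).2, (comp1 0).2]
  norm_num

noncomputable def Phi3 (t : ℝ) : ℝ :=
  -4*((t^2+1)⁻¹*(Real.log (1+t^2)^2 + 2*Real.log (1+t^2) + 2)
    - ((t^2+1)⁻¹)^2*(Real.log (1+t^2)^2 + Real.log (1+t^2) + 1/2)) + 6

lemma Phi3_deriv (t : ℝ) : HasDerivAt Phi3 (psi0 t * eta0 t ^ 2) t := by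
  have hu := hasDerivAt_u t
  have hL := hasDerivAt_Leta t
  have hA := ((hL.pow 2).add (hL.const_mul 2)).add_const 2
  have hB := ((hL.pow 2).add hL).add_const (1/2)
  have h := (((hu.mul hA).sub ((hu.pow 2).mul hB)).const_mul (-4:ℝ)).add_const 6
  have he : Phi3 = fun t : ℝ =>
      -4*((t^2+1)⁻¹*(Real.log (1+t^2)^2 + 2*Real.log (1+t^2) + 2)
        - ((t^2+1)⁻¹)^2*(Real.log (1+t^2)^2 + Real.log (1+t^2) + 1/2)) + 6 := rfl
  rw [he]
  refine h.congr_deriv ?_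
  unfold psi0 eta0
  have h1 : (t:ℝ)^2+1 ≠ 0 := by positivity
  have h2 : (1:ℝ)+t^2 ≠ 0 := by positivity
  norm_num [Pi.pow_apply]
  field_simp
  ring

lemma eta0_nonneg (t : ℝ) : 0 ≤ eta0 t := Real.log_nonneg (by nlinarith [sq_nonneg t])

lemma eta0_le (t : ℝ) : eta0 t ≤ 4 * Real.sqrt (Real.sqrt (1+t^2)) := by
  set w := Real.sqrt (1+t^2) with hwdef
  set v := Real.sqrt w with hvdef
  have hw2 : w^2 = 1+t^2 := Real.sq_sqrt (by positivity)
  have hw0 : 0 ≤ w := Real.sqrt_nonneg _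
  have hv2 : v^2 = w := Real.sq_sqrt hw0
  have hv0 : 0 ≤ v := Real.sqrt_nonneg _
  have hw1 : 1 ≤ w := by nlinarith [sq_nonneg t]
  have hv1 : 1 ≤ v := by nlinarith
  have hvp : (0:ℝ) < v := by linarith
  have h4 : v^4 = 1+t^2 := by
    have : v^4 = (v^2)^2 := by ring
    rw [this, hv2, hw2]
  have heq : eta0 t = 4 * Real.log v := by
    unfold eta0
    rw [← h4, Real.log_pow]
    norm_num
  rw [heq]
  have := Real.log_le_sub_one_of_pos hvp
  linarith

lemma Fint3 : IntegrableOn (fun t => psi0 t * eta0 t ^ 2) (Ioi (0:ℝ)) := by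
  apply int_bound (fun t => psi0 t * eta0 t ^ 2) (cont_psi0.mul (cont_eta0.pow 2))
  intro t ht
  rw [Real.norm_eq_abs, abs_mul]
  set w := Real.sqrt (1+t^2) with hwdef
  set v := Real.sqrt w with hvdef
  have hw2 : w^2 = 1+t^2 := Real.sq_sqrt (by positivity)
  have hw0 : 0 ≤ w := Real.sqrt_nonneg _
  have hv2 : v^2 = w := Real.sq_sqrt hw0
  have hv0 : 0 ≤ v := Real.sqrt_nonneg _
  have hw1 : 1 ≤ w := by nlinarith [sq_nonneg t]
  have htw : t ≤ w := by nlinarith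
  have h2 : |eta0 t ^ 2| ≤ 16 * v^2 := by
    rw [abs_pow, abs_of_nonneg (eta0_nonneg t)]
    have h := eta0_le t
    nlinarith [eta0_nonneg t]
  have h3 : |psi0 t| * |eta0 t ^ 2| ≤ (8*t/(t^2+1)^2) * (16*v^2) :=
    mul_le_mul (psi0_abs ht) h2 (abs_nonneg _) (by positivity)
  refine h3.trans ?_
  rw [div_mul_eq_mul_div, div_le_iff₀ (by positivity)]
  have hinv : (1+t^2)⁻¹ * (1+t^2) = 1 := by field_simp
  have key : t * w ≤ 1+t^2 := by nlinarith
  have expand : 8*t*(16*v^2) = 128 * (t*w) := by rw [hv2]; ring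
  rw [expand]
  have hsimp : 128 * (1+t^2)⁻¹ * (t^2+1)^2 = 128*(1+t^2) := by
    field_simp
    ring
  rw [hsimp]
  nlinarith

lemma case3 : (∫ t in Ioi (0:ℝ), psi0 t * eta0 t ^ 2 * theta0 t)
    = 11 - 8 * (∑' n : ℕ, 1/((n:ℝ)+1)^3) := by
  refine Eq.trans (master (fun t => psi0 t * eta0 t ^ 2) Phi3
    (cont_psi0.mul (cont_eta0.pow 2)) Phi3_deriv (by unfold Phi3; norm_num) Fint3) ?_
  have hpt : ∀ s ∈ Ioi (0:ℝ), gg s * Phi3 (Real.sqrt s) =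
      -4 * (Real.log (s+1)^3 / (s+1)^(1+2)) + (-4 * (Real.log (s+1)^2 / (s+1)^(1+2))
        + (4 * (Real.log (s+1)^2 / (s+1)^(0+2)) + (-2 * (Real.log (s+1) / (s+1)^(1+2))
        + (6 * (Real.log (s+1) / (s+1)^(0+2)) + -4 * gg2 s)))) := by
    intro s hs
    have hs0 : (0:ℝ) < s := hs
    unfold gg gg2 Phi3
    rw [Real.sq_sqrt hs0.le]
    have hlog : Real.log (1+s) = Real.log (s+1) := by rw [add_comm]
    rw [hlog]
    have h1 : s ≠ 0 := ne_of_gt hs0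
    have h2 : s + 1 ≠ 0 := by positivity
    field_simp
    ring
  rw [setIntegral_congr_fun measurableSet_Ioi hpt]
  have ha : Integrable (fun s : ℝ => -4 * (Real.log (s+1)^3 / (s+1)^(1+2)))
      (volume.restrict (Ioi 0)) := (comp3 1).1.const_mul _
  have hb : Integrable (fun s : ℝ => -4 * (Real.log (s+1)^2 / (s+1)^(1+2)))
      (volume.restrict (Ioi 0)) := (comp2 1).1.const_mul _
  have hc : Integrable (fun s : ℝ => 4 * (Real.log (s+1)^2 / (s+1)^(0+2)))
      (volume.restrict (Ioi 0)) := (comp2 0).1.const_mul _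
  have hd : Integrable (fun s : ℝ => -2 * (Real.log (s+1) / (s+1)^(1+2)))
      (volume.restrict (Ioi 0)) := (comp1 1).1.const_mul _
  have he : Integrable (fun s : ℝ => 6 * (Real.log (s+1) / (s+1)^(0+2)))
      (volume.restrict (Ioi 0)) := (comp1 0).1.const_mul _
  have hf : Integrable (fun s : ℝ => -4 * gg2 s)
      (volume.restrict (Ioi 0)) := gg2_int.const_mul _
  have hef : Integrable (fun s : ℝ => 6 * (Real.log (s+1) / (s+1)^(0+2)) + -4 * gg2 s)
      (volume.restrict (Ioi 0)) := he.add hf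
  have hdef : Integrable (fun s : ℝ => -2 * (Real.log (s+1) / (s+1)^(1+2))
      + (6 * (Real.log (s+1) / (s+1)^(0+2)) + -4 * gg2 s)) (volume.restrict (Ioi 0)) := hd.add hef
  have hcdef : Integrable (fun s : ℝ => 4 * (Real.log (s+1)^2 / (s+1)^(0+2))
      + (-2 * (Real.log (s+1) / (s+1)^(1+2)) + (6 * (Real.log (s+1) / (s+1)^(0+2)) + -4 * gg2 s)))
      (volume.restrict (Ioi 0)) := hc.add hdef
  have hbcdef : Integrable (fun s : ℝ => -4 * (Real.log (s+1)^2 / (s+1)^(1+2))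
      + (4 * (Real.log (s+1)^2 / (s+1)^(0+2)) + (-2 * (Real.log (s+1) / (s+1)^(1+2))
      + (6 * (Real.log (s+1) / (s+1)^(0+2)) + -4 * gg2 s)))) (volume.restrict (Ioi 0)) := hb.add hcdef
  rw [integral_add ha hbcdef, integral_add hb hcdef, integral_add hc hdef, integral_add hd hef,
    integral_add he hf, integral_const_mul, integral_const_mul, integral_const_mul,
    integral_const_mul, integral_const_mul, integral_const_mul,
    (comp3 1).2, (comp2 1).2, (comp2 0).2, (comp1 1).2, (comp1 0).2, gg2_integral]
  norm_num
  ring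

noncomputable def Phi4 (t : ℝ) : ℝ :=
  -2*((t^2+1)⁻¹)^2*Real.log (1+t^2) - ((t^2+1)⁻¹)^2
    + (8/3)*((t^2+1)⁻¹)^3*Real.log (1+t^2) + (8/9)*((t^2+1)⁻¹)^3 + 1/9

lemma Phi4_deriv (t : ℝ) : HasDerivAt Phi4 (psi0 t * eta0 t * zeta0 t) t := by
  have hu := hasDerivAt_u t
  have hL := hasDerivAt_Leta t
  have e1 := ((hu.pow 2).const_mul (-2:ℝ)).mul hL
  have e2 := e1.sub (hu.pow 2)
  have e3 := e2.add (((hu.pow 3).const_mul ((8:ℝ)/3)).mul hL)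
  have e4 := e3.add ((hu.pow 3).const_mul ((8:ℝ)/9))
  have h := e4.add_const (1/9)
  have he : Phi4 = fun t : ℝ =>
      -2*((t^2+1)⁻¹)^2*Real.log (1+t^2) - ((t^2+1)⁻¹)^2
        + (8/3)*((t^2+1)⁻¹)^3*Real.log (1+t^2) + (8/9)*((t^2+1)⁻¹)^3 + 1/9 := rfl
  rw [he]
  refine h.congr_deriv ?_
  unfold psi0 eta0 zeta0
  have h1 : (t:ℝ)^2+1 ≠ 0 := by positivity
  have h2 : (1:ℝ)+t^2 ≠ 0 := by positivity
  norm_num [Pi.pow_apply]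
  field_simp
  ring

lemma Fint4 : IntegrableOn (fun t => psi0 t * eta0 t * zeta0 t) (Ioi (0:ℝ)) := by
  apply int_bound (fun t => psi0 t * eta0 t * zeta0 t) ((cont_psi0.mul cont_eta0).mul cont_zeta0)
  intro t ht
  rw [Real.norm_eq_abs, abs_mul, abs_mul]
  set w := Real.sqrt (1+t^2) with hwdef
  set v := Real.sqrt w with hvdef
  have hw2 : w^2 = 1+t^2 := Real.sq_sqrt (by positivity)
  have hw0 : 0 ≤ w := Real.sqrt_nonneg _
  have hv2 : v^2 = w := Real.sq_sqrt hw0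
  have hv0 : 0 ≤ v := Real.sqrt_nonneg _
  have hw1 : 1 ≤ w := by nlinarith [sq_nonneg t]
  have hv1 : 1 ≤ v := by nlinarith
  have htw : t ≤ w := by nlinarith
  have hvw : v ≤ w := by nlinarith
  have h2 : |eta0 t| ≤ 4 * v := by
    rw [abs_of_nonneg (eta0_nonneg t)]
    exact eta0_le t
  have hz : |zeta0 t| ≤ 1 := by
    unfold zeta0
    rw [abs_of_pos (by positivity), div_le_one (by positivity)]
    nlinarith
  have h3 : |psi0 t| * |eta0 t| ≤ (8*t/(t^2+1)^2) * (4*v) :=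
    mul_le_mul (psi0_abs ht) h2 (abs_nonneg _) (by positivity)
  have h4 : |psi0 t| * |eta0 t| * |zeta0 t| ≤ (8*t/(t^2+1)^2) * (4*v) * 1 :=
    mul_le_mul h3 hz (abs_nonneg _) (by positivity)
  refine h4.trans ?_
  rw [mul_one, div_mul_eq_mul_div, div_le_iff₀ (by positivity)]
  have hsimp : 128 * (1+t^2)⁻¹ * (t^2+1)^2 = 128*(1+t^2) := by
    field_simp
    ring
  rw [hsimp]
  nlinarith

lemma case4 : (∫ t in Ioi (0:ℝ), psi0 t * eta0 t * zeta0 t * theta0 t)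
    = 4/3 * (∑' n : ℕ, 1/((n:ℝ)+1)^3) - 179/108 := by
  refine Eq.trans (master (fun t => psi0 t * eta0 t * zeta0 t) Phi4
    ((cont_psi0.mul cont_eta0).mul cont_zeta0) Phi4_deriv (by unfold Phi4; norm_num) Fint4) ?_
  have hpt : ∀ s ∈ Ioi (0:ℝ), gg s * Phi4 (Real.sqrt s) =
      (2/3) * gg2 s + (-(2/3) * (Real.log (s+1)^2 / (s+1)^(0+2))
        + (-(2/3) * (Real.log (s+1)^2 / (s+1)^(1+2)) + (-(8/3) * (Real.log (s+1)^2 / (s+1)^(2+2))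
        + (-(8/9) * (Real.log (s+1) / (s+1)^(2+2)) + ((1/9) * (Real.log (s+1) / (s+1)^(1+2))
        + (1/9) * (Real.log (s+1) / (s+1)^(0+2))))))) := by
    intro s hs
    have hs0 : (0:ℝ) < s := hs
    unfold gg gg2 Phi4
    rw [Real.sq_sqrt hs0.le]
    have hlog : Real.log (1+s) = Real.log (s+1) := by rw [add_comm]
    rw [hlog]
    have h1 : s ≠ 0 := ne_of_gt hs0
    have h2 : s + 1 ≠ 0 := by positivity
    field_simp
    ring
  rw [setIntegral_congr_fun measurableSet_Ioi hpt]
  have ha : Integrable (fun s : ℝ => (2/3) * gg2 s)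
      (volume.restrict (Ioi 0)) := gg2_int.const_mul _
  have hb : Integrable (fun s : ℝ => -(2/3) * (Real.log (s+1)^2 / (s+1)^(0+2)))
      (volume.restrict (Ioi 0)) := (comp2 0).1.const_mul _
  have hc : Integrable (fun s : ℝ => -(2/3) * (Real.log (s+1)^2 / (s+1)^(1+2)))
      (volume.restrict (Ioi 0)) := (comp2 1).1.const_mul _
  have hd : Integrable (fun s : ℝ => -(8/3) * (Real.log (s+1)^2 / (s+1)^(2+2)))
      (volume.restrict (Ioi 0)) := (comp2 2).1.const_mul _
  have he : Integrable (fun s : ℝ => -(8/9) * (Real.log (s+1) / (s+1)^(2+2)))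
      (volume.restrict (Ioi 0)) := (comp1 2).1.const_mul _
  have hf : Integrable (fun s : ℝ => (1/9) * (Real.log (s+1) / (s+1)^(1+2)))
      (volume.restrict (Ioi 0)) := (comp1 1).1.const_mul _
  have hg : Integrable (fun s : ℝ => (1/9) * (Real.log (s+1) / (s+1)^(0+2)))
      (volume.restrict (Ioi 0)) := (comp1 0).1.const_mul _
  have hfg : Integrable (fun s : ℝ => (1/9) * (Real.log (s+1) / (s+1)^(1+2))
      + (1/9) * (Real.log (s+1) / (s+1)^(0+2))) (volume.restrict (Ioi 0)) := hf.add hg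
  have hefg : Integrable (fun s : ℝ => -(8/9) * (Real.log (s+1) / (s+1)^(2+2))
      + ((1/9) * (Real.log (s+1) / (s+1)^(1+2)) + (1/9) * (Real.log (s+1) / (s+1)^(0+2))))
      (volume.restrict (Ioi 0)) := he.add hfg
  have hdefg : Integrable (fun s : ℝ => -(8/3) * (Real.log (s+1)^2 / (s+1)^(2+2))
      + (-(8/9) * (Real.log (s+1) / (s+1)^(2+2)) + ((1/9) * (Real.log (s+1) / (s+1)^(1+2))
      + (1/9) * (Real.log (s+1) / (s+1)^(0+2))))) (volume.restrict (Ioi 0)) := hd.add hefg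
  have hcdefg : Integrable (fun s : ℝ => -(2/3) * (Real.log (s+1)^2 / (s+1)^(1+2))
      + (-(8/3) * (Real.log (s+1)^2 / (s+1)^(2+2)) + (-(8/9) * (Real.log (s+1) / (s+1)^(2+2))
      + ((1/9) * (Real.log (s+1) / (s+1)^(1+2)) + (1/9) * (Real.log (s+1) / (s+1)^(0+2))))))
      (volume.restrict (Ioi 0)) := hc.add hdefg
  have hbcdefg : Integrable (fun s : ℝ => -(2/3) * (Real.log (s+1)^2 / (s+1)^(0+2))
      + (-(2/3) * (Real.log (s+1)^2 / (s+1)^(1+2)) + (-(8/3) * (Real.log (s+1)^2 / (s+1)^(2+2))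
      + (-(8/9) * (Real.log (s+1) / (s+1)^(2+2)) + ((1/9) * (Real.log (s+1) / (s+1)^(1+2))
      + (1/9) * (Real.log (s+1) / (s+1)^(0+2)))))))
      (volume.restrict (Ioi 0)) := hb.add hcdefg
  rw [integral_add ha hbcdefg, integral_add hb hcdefg, integral_add hc hdefg,
    integral_add hd hefg, integral_add he hfg, integral_add hf hg,
    integral_const_mul, integral_const_mul, integral_const_mul, integral_const_mul,
    integral_const_mul, integral_const_mul, integral_const_mul,
    (comp2 0).2, (comp2 1).2, (comp2 2).2, (comp1 2).2, (comp1 1).2, (comp1 0).2, gg2_integral]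
  norm_num
  ring

theorem stmt11 :
    (∫ t in Set.Ioi (0 : ℝ), psi0 t * zeta0 t * theta0 t) = -61 / 54 ∧
    (∫ t in Set.Ioi (0 : ℝ), psi0 t * zeta0 t ^ 2 * theta0 t) = -223 / 216 ∧
    (∫ t in Set.Ioi (0 : ℝ), psi0 t * eta0 t ^ 2 * theta0 t) = 11 - 8 * zeta3 ∧
    (∫ t in Set.Ioi (0 : ℝ), psi0 t * eta0 t * zeta0 t * theta0 t)
      = 4 / 3 * zeta3 - 179 / 108 := by
  refine ⟨case1, case2, case3, case4⟩
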